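/- Under strictly decreasing marginal values, the ending clock price p̃* of the CMRA under CMRA-truthful bidding is strictly below the clock-auction clearing price p* = u_1(x_1*) = u_2(x_2*), and ex-post revenue under CMRA-truthful bidding, B_1(x_1*;p̃*) + B_2(x_2*;p̃*), is strictly below the clock-auction revenue p*. Specifically, for any p ≤ p*, each winning truthful bid satisfies B_i(x_i*;p) = U_i(x_i*) - V_i(p) ≤ p·x_i* ≤ p*·x_i*. -/

import Mathlib

lemma bidder_aux (lam : ℝ)
    (U u : ℝ → ℝ)
    (hd : ∀ x ∈ Set.Icc (0:ℝ) lam, HasDerivAt U (u x) x)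
    (hdec : StrictAntiOn u (Set.Icc (0:ℝ) lam))
    (x p : ℝ) (hx0 : 0 < x) (hxl : x < lam) (hfoc : u x = p)
    (V : ℝ) (hV : IsGreatest ((fun y => U y - p * y) '' Set.Icc (0:ℝ) lam) V) :
    V = U x - p * x ∧ U lam - U x < p * (lam - x) := by
  set g : ℝ → ℝ := fun y => U y - p * y with hg
  have hgd : ∀ y ∈ Set.Icc (0:ℝ) lam, HasDerivAt g (u y - p) y := by
    intro y hy
    have := (hd y hy).sub ((hasDerivAt_id y).const_mul p)
    simp only [id_eq, mul_one] at this
    exact this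
  have hcont : ContinuousOn g (Set.Icc 0 lam) :=
    fun y hy => (hgd y hy).continuousAt.continuousWithinAt
  have hxmem : x ∈ Set.Icc (0:ℝ) lam := ⟨hx0.le, hxl.le⟩
  have hmono : StrictMonoOn g (Set.Icc 0 x) := by
    apply strictMonoOn_of_deriv_pos (convex_Icc 0 x)
      (hcont.mono (Set.Icc_subset_Icc le_rfl hxl.le))
    intro y hy
    rw [interior_Icc] at hy
    have hy' : y ∈ Set.Icc (0:ℝ) lam := ⟨hy.1.le, (hy.2.le.trans hxl.le)⟩
    rw [(hgd y hy').deriv]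
    have := hdec hy' hxmem hy.2
    rw [hfoc] at this
    linarith
  have hanti : StrictAntiOn g (Set.Icc x lam) := by
    apply strictAntiOn_of_deriv_neg (convex_Icc x lam)
      (hcont.mono (Set.Icc_subset_Icc hx0.le le_rfl))
    intro y hy
    rw [interior_Icc] at hy
    have hy' : y ∈ Set.Icc (0:ℝ) lam := ⟨(hx0.le.trans hy.1.le), hy.2.le⟩
    rw [(hgd y hy').deriv]
    have := hdec hxmem hy' hy.1
    rw [hfoc] at this
    linarith
  have hmax : ∀ y ∈ Set.Icc (0:ℝ) lam, g y ≤ g x := by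
    intro y hy
    rcases le_or_gt y x with h | h
    · rcases eq_or_lt_of_le h with rfl | h
      · exact le_rfl
      · exact (hmono ⟨hy.1, h.le⟩ ⟨hx0.le, le_rfl⟩ h).le
    · exact (hanti ⟨le_rfl, hxl.le⟩ ⟨h.le, hy.2⟩ h).le
  constructor
  · obtain ⟨y, hy, hyV⟩ := hV.1
    have h1 : V ≤ g x := hyV ▸ hmax y hy
    have h2 : g x ≤ V := hV.2 ⟨x, hxmem, rfl⟩
    exact le_antisymm h1 h2
  · have h := hanti ⟨le_rfl, hxl.le⟩ ⟨hxl.le, le_rfl⟩ hxl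
    simp only [hg] at h
    linarith

/-- With strictly decreasing marginal values, the CMRA under CMRA-truthful
bidding ends at a clock price p̃* strictly below the clearing price p*, with ex-post
revenue strictly below p*; moreover each winning truthful bid satisfies
B_i(x_i*;p) = U_i(x_i*) - V_i(p) ≤ p·x_i* ≤ p*·x_i* for any 0 ≤ p ≤ p*. -/
theorem cmra_truthful_revenue_below_clock
    (lam : ℝ) (hlam : 1/2 < lam ∧ lam < 1)
    (U₁ U₂ u₁ u₂ : ℝ → ℝ)
    (hU₁0 : U₁ 0 = 0) (hU₂0 : U₂ 0 = 0)
    (hd₁ : ∀ x ∈ Set.Icc (0:ℝ) lam, HasDerivAt U₁ (u₁ x) x)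
    (hd₂ : ∀ x ∈ Set.Icc (0:ℝ) lam, HasDerivAt U₂ (u₂ x) x)
    (hpos₁ : ∀ x ∈ Set.Icc (0:ℝ) lam, 0 < u₁ x)
    (hpos₂ : ∀ x ∈ Set.Icc (0:ℝ) lam, 0 < u₂ x)
    (hdec₁ : StrictAntiOn u₁ (Set.Icc (0:ℝ) lam))
    (hdec₂ : StrictAntiOn u₂ (Set.Icc (0:ℝ) lam))
    (V₁ V₂ : ℝ → ℝ)
    (hV₁ : ∀ p : ℝ, 0 ≤ p →
      IsGreatest ((fun x => U₁ x - p * x) '' Set.Icc (0:ℝ) lam) (V₁ p))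
    (hV₂ : ∀ p : ℝ, 0 ≤ p →
      IsGreatest ((fun x => U₂ x - p * x) '' Set.Icc (0:ℝ) lam) (V₂ p))
    (x₁ x₂ pstar : ℝ)
    (hint₁ : 1 - lam < x₁ ∧ x₁ < lam) (hint₂ : 1 - lam < x₂ ∧ x₂ < lam)
    (hsum : x₁ + x₂ = 1)
    (hfoc : u₁ x₁ = pstar ∧ u₂ x₂ = pstar)
    (ptilde : ℝ) (hptilde0 : 0 ≤ ptilde)
    -- ptilde is the smallest price at which the efficient allocation is revenue-maximizing:
    (hend : (U₁ x₁ - V₁ ptilde) + (U₂ x₂ - V₂ ptilde)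
              = max (U₁ lam - V₁ ptilde) (U₂ lam - V₂ ptilde))
    (hmin : ∀ p : ℝ, 0 ≤ p → p < ptilde →
      (U₁ x₁ - V₁ p) + (U₂ x₂ - V₂ p) < max (U₁ lam - V₁ p) (U₂ lam - V₂ p)) :
    ptilde < pstar ∧
    (U₁ x₁ - V₁ ptilde) + (U₂ x₂ - V₂ ptilde) < pstar ∧
    (∀ p : ℝ, 0 ≤ p → p ≤ pstar →
      (U₁ x₁ - V₁ p ≤ p * x₁ ∧ p * x₁ ≤ pstar * x₁) ∧
      (U₂ x₂ - V₂ p ≤ p * x₂ ∧ p * x₂ ≤ pstar * x₂)) := by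
  have hx₁0 : 0 < x₁ := by linarith [hint₁.1, hlam.2]
  have hx₂0 : 0 < x₂ := by linarith [hint₂.1, hlam.2]
  have hx₁mem : x₁ ∈ Set.Icc (0:ℝ) lam := ⟨hx₁0.le, hint₁.2.le⟩
  have hx₂mem : x₂ ∈ Set.Icc (0:ℝ) lam := ⟨hx₂0.le, hint₂.2.le⟩
  have hps : 0 < pstar := hfoc.1 ▸ hpos₁ x₁ hx₁mem
  -- key facts at pstar
  obtain ⟨hVe₁, hUl₁⟩ := bidder_aux lam U₁ u₁ hd₁ hdec₁ x₁ pstar hx₁0 hint₁.2 hfoc.1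
    (V₁ pstar) (hV₁ pstar hps.le)
  obtain ⟨hVe₂, hUl₂⟩ := bidder_aux lam U₂ u₂ hd₂ hdec₂ x₂ pstar hx₂0 hint₂.2 hfoc.2
    (V₂ pstar) (hV₂ pstar hps.le)
  have hlam1 : lam < 1 := hlam.2
  have hkey : max (U₁ lam - V₁ pstar) (U₂ lam - V₂ pstar)
      < (U₁ x₁ - V₁ pstar) + (U₂ x₂ - V₂ pstar) := by
    have hLHS : (U₁ x₁ - V₁ pstar) + (U₂ x₂ - V₂ pstar) = pstar := by
      rw [hVe₁, hVe₂]
      have : pstar * x₁ + pstar * x₂ = pstar := by rw [← mul_add, hsum, mul_one]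
      linarith
    have h1 : U₁ lam - V₁ pstar < pstar := by
      rw [hVe₁]
      nlinarith
    have h2 : U₂ lam - V₂ pstar < pstar := by
      rw [hVe₂]
      nlinarith
    rw [hLHS]
    exact max_lt h1 h2
  have hlt : ptilde < pstar := by
    by_contra h
    push_neg at h
    rcases eq_or_lt_of_le h with heq | hlt
    · rw [← heq] at hend
      exact absurd hend (ne_of_gt hkey)
    · exact absurd (hmin pstar hps.le hlt) (not_lt.mpr hkey.le)
  have hbid : ∀ p : ℝ, 0 ≤ p → p ≤ pstar →
      (U₁ x₁ - V₁ p ≤ p * x₁ ∧ p * x₁ ≤ pstar * x₁) ∧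
      (U₂ x₂ - V₂ p ≤ p * x₂ ∧ p * x₂ ≤ pstar * x₂) := by
    intro p hp0 hpp
    have h1 : U₁ x₁ - p * x₁ ≤ V₁ p := (hV₁ p hp0).2 ⟨x₁, hx₁mem, rfl⟩
    have h2 : U₂ x₂ - p * x₂ ≤ V₂ p := (hV₂ p hp0).2 ⟨x₂, hx₂mem, rfl⟩
    exact ⟨⟨by linarith, mul_le_mul_of_nonneg_right hpp hx₁0.le⟩,
      ⟨by linarith, mul_le_mul_of_nonneg_right hpp hx₂0.le⟩⟩
  refine ⟨hlt, ?_, hbid⟩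
  obtain ⟨⟨hb1, _⟩, ⟨hb2, _⟩⟩ := hbid ptilde hptilde0 hlt.le
  have : ptilde * x₁ + ptilde * x₂ = ptilde := by rw [← mul_add, hsum, mul_one]
  linarith
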